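/- Let k₁, k₂ be real numbers, and let R : ℝ → ℝ^{3×3}, E_R : ℝ → ℝ^{3×3}, e_Ω : ℝ → ℝ³ be differentiable functions satisfying, for all t, E_R'(t) = −R(t)·(e_Ω(t))× − k₁ E_R(t) and e_Ω'(t) = k₂ (π_{so(3)}(R(t)ᵀ E_R(t)))∨. Then the function V₁(t) = (k₂/2)‖E_R(t)‖² + ‖e_Ω(t)‖² is differentiable with V₁'(t) = −k₁k₂‖E_R(t)‖² for all t, where ‖E_R‖² = ⟨E_R, E_R⟩ is the squared Frobenius norm. -/

import Mathlib

open Matrix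

/-- The skew-symmetric matrix `v×` associated to `v ∈ ℝ³`. -/
noncomputable def skewMat (v : Fin 3 → ℝ) : Matrix (Fin 3) (Fin 3) ℝ :=
  !![0, -v 2, v 1;
     v 2, 0, -v 0;
     -v 1, v 0, 0]

/-- Orthogonal projection `π_{so(3)}(A) = (A − Aᵀ)/2` onto skew-symmetric matrices. -/
noncomputable def pso3 (A : Matrix (Fin 3) (Fin 3) ℝ) : Matrix (Fin 3) (Fin 3) ℝ :=
  (2⁻¹ : ℝ) • (A - Aᵀ)

/-- The inverse `(·)∨` of the operator `(·)×`. -/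
noncomputable def vee (S : Matrix (Fin 3) (Fin 3) ℝ) : Fin 3 → ℝ :=
  ![S 2 1, S 0 2, S 1 0]

/-- The Frobenius inner product `⟨A, B⟩ = trace(Aᵀ B)`. -/
noncomputable def frob (A B : Matrix (Fin 3) (Fin 3) ℝ) : ℝ := (Aᵀ * B).trace

/-- If `E_R' = −R (e_Ω)× − k₁ E_R` and `e_Ω' = k₂ (π_{so(3)}(Rᵀ E_R))∨` (entrywise
derivatives), then `V₁(t) = (k₂/2)‖E_R(t)‖² + ‖e_Ω(t)‖²` is differentiable with
`V₁'(t) = −k₁k₂‖E_R(t)‖²`, where `‖·‖` is the Frobenius norm. -/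
theorem stmt11 (k1 k2 : ℝ)
    (R E_R : ℝ → Matrix (Fin 3) (Fin 3) ℝ) (eΩ : ℝ → Fin 3 → ℝ)
    (hE : ∀ (t : ℝ) (i j : Fin 3), HasDerivAt (fun s => E_R s i j)
      ((-(R t * skewMat (eΩ t)) - k1 • E_R t) i j) t)
    (he : ∀ (t : ℝ) (i : Fin 3), HasDerivAt (fun s => eΩ s i)
      (k2 * vee (pso3 ((R t)ᵀ * E_R t)) i) t) :
    ∀ t : ℝ, HasDerivAt
      (fun s => k2 / 2 * frob (E_R s) (E_R s) + ∑ i, eΩ s i ^ 2)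
      (-(k1 * k2) * frob (E_R t) (E_R t)) t := by
  intro t
  have hF : ∀ i j : Fin 3, HasDerivAt (fun s => E_R s i j ^ 2)
      (2 * E_R t i j * ((-(R t * skewMat (eΩ t)) - k1 • E_R t) i j)) t := by
    intro i j
    simpa using (hE t i j).fun_pow 2
  have hS1 : HasDerivAt (fun s => ∑ i : Fin 3, ∑ j : Fin 3, E_R s i j ^ 2)
      (∑ i : Fin 3, ∑ j : Fin 3,
        2 * E_R t i j * ((-(R t * skewMat (eΩ t)) - k1 • E_R t) i j)) t :=
    HasDerivAt.fun_sum fun i _ => HasDerivAt.fun_sum fun j _ => hF i j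
  have hS2 : HasDerivAt (fun s => ∑ i, eΩ s i ^ 2)
      (∑ i : Fin 3, 2 * eΩ t i * (k2 * vee (pso3 ((R t)ᵀ * E_R t)) i)) t :=
    HasDerivAt.fun_sum fun i _ => by simpa using (he t i).fun_pow 2
  have hV := (hS1.const_mul (k2 / 2)).fun_add hS2
  have hfun : (fun s => k2 / 2 * frob (E_R s) (E_R s) + ∑ i, eΩ s i ^ 2)
      = fun s => k2 / 2 * ∑ i : Fin 3, ∑ j : Fin 3, E_R s i j ^ 2 + ∑ i, eΩ s i ^ 2 := by
    funext s
    simp only [frob, Matrix.trace, Matrix.mul_apply, Matrix.diag_apply,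
      Matrix.transpose_apply, Fin.sum_univ_three]
    ring
  rw [hfun]
  refine hV.congr_deriv ?_
  simp [frob, Matrix.trace, Matrix.mul_apply, Matrix.diag_apply, Fin.sum_univ_three,
    skewMat, pso3, vee, Matrix.smul_apply, Matrix.sub_apply, Matrix.neg_apply,
    Matrix.transpose_apply, smul_eq_mul]
  ring
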